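/- arXiv:2303.04527 — 3 statements merged into one kernel-verified Lean document; each statement's English description precedes it below -/
import Mathlib

section
/- Let Ω ⊂ ℝ^d be bounded open with a regular weakly balanced p-multiscale decomposition (Ω_{n,k}) and let f = ∑_{j=0}^{p^n-1} f_{n,j} 𝟙_{Ω_{n,j}} be a level-n piecewise constant function. Then there exists C ≥ 2, depending only on the decomposition constants (C₀, c₁, c₂, d, |Ω|), such that the modulus of smoothness w(f,t) := sup_{|h|≤t} ‖f(·+h) - f‖_{L²(Ω ∩ (Ω+h))} satisfies w(f,t) ≤ C p^{n/(2d)} t^{1/2} ‖f‖_{L²(Ω)} for all t > 0. -/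
set_option maxHeartbeats 1000000


open MeasureTheory
open scoped ENNReal

private lemma image_add_eq_preimage' {E : Type*} [AddCommGroup E] (h : E) (s : Set E) :
    (fun x => x + h) '' s = (fun x => x + (-h)) ⁻¹' s := by
  ext y
  constructor
  · rintro ⟨x, hx, rfl⟩
    simpa using hx
  · intro hy
    exact ⟨y + -h, hy, neg_add_cancel_right y h⟩

/-- For a level-`n` piecewise constant function `f = ∑_j f_{n,j} 𝟙_{Ω_{n,j}}` with
respect to a regular weakly balanced `p`-multiscale decomposition, the modulus of
smoothness satisfies `w(f,t) ≤ C p^{n/(2d)} t^{1/2} ‖f‖_{L²(Ω)}` with `C ≥ 2`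
depending only on the decomposition constants. -/
theorem piecewise_constant_modulus_of_smoothness (d p : ℕ) (hd : 1 ≤ d) (hp : 2 ≤ p)
    (Ω : Set (EuclideanSpace ℝ (Fin d))) (hΩo : IsOpen Ω) (hΩb : Bornology.IsBounded Ω)
    (hΩne : Ω.Nonempty)
    (Ωf : ℕ → ℕ → Set (EuclideanSpace ℝ (Fin d)))
    (hmeas : ∀ (n k : ℕ), k < p ^ n → MeasurableSet (Ωf n k))
    (hne : ∀ (n k : ℕ), k < p ^ n → (Ωf n k).Nonempty)
    (h00 : Ωf 0 0 = Ω)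
    (hdisj : ∀ (n k k' : ℕ), k < p ^ n → k' < p ^ n → k ≠ k' →
      Disjoint (Ωf n k) (Ωf n k'))
    (hsub : ∀ (n k j : ℕ), k < p ^ n → j < p → Ωf (n + 1) (p * k + j) ⊆ Ωf n k)
    (hcover : ∀ (n k : ℕ), k < p ^ n →
      volume (Ωf n k \ ⋃ j ∈ Finset.range p, Ωf (n + 1) (p * k + j)) = 0)
    (C₀ c₁ c₂ : ℝ) (hC₀ : 1 ≤ C₀) (hc₁ : 0 < c₁) (hc₂ : 0 < c₂)
    (hA4 : ∀ (n k : ℕ), k < p ^ n →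
      C₀⁻¹ * (volume Ω).toReal * (p : ℝ) ^ (-(n : ℝ)) ≤ (volume (Ωf n k)).toReal ∧
      (volume (Ωf n k)).toReal ≤ C₀ * (volume Ω).toReal * (p : ℝ) ^ (-(n : ℝ)))
    (hA5 : ∀ (n k : ℕ), k < p ^ n →
      Metric.diam (Ωf n k) ≤ c₁ * (p : ℝ) ^ (-(n : ℝ) / d))
    (hA6 : ∀ (n k : ℕ), k < p ^ n → ∀ h : EuclideanSpace ℝ (Fin d),
      volume (Ωf n k \ ((fun x => x + h) '' (Ωf n k)))
        ≤ ENNReal.ofReal (c₂ * ‖h‖ * (p : ℝ) ^ (-((n : ℝ) * (d - 1)) / d))) :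
    ∃ C : ℝ, 2 ≤ C ∧
      ∀ (n : ℕ) (coef : ℕ → ℝ) (f : EuclideanSpace ℝ (Fin d) → ℝ),
        (∀ x, f x = ∑ k ∈ Finset.range (p ^ n),
          Set.indicator (Ωf n k) (fun _ => coef k) x) →
        ∀ t : ℝ, 0 < t →
          (⨆ h ∈ {h : EuclideanSpace ℝ (Fin d) | ‖h‖ ≤ t},
              eLpNorm (fun x => f (x + h) - f x) 2
                (volume.restrict (Ω ∩ {x | x + h ∈ Ω})))
            ≤ ENNReal.ofReal (C * (p : ℝ) ^ ((n : ℝ) / (2 * d)) * t ^ ((1:ℝ)/2)) *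
              eLpNorm f 2 (volume.restrict Ω) := by
  have hppos : (0:ℝ) < (p:ℝ) := by
    have : (2:ℝ) ≤ (p:ℝ) := by exact_mod_cast hp
    linarith
  have hpnat : 0 < p := lt_of_lt_of_le two_pos hp
  have hdpos : (0:ℝ) < (d:ℝ) := by
    have : (1:ℝ) ≤ (d:ℝ) := by exact_mod_cast hd
    linarith
  have hC₀pos : (0:ℝ) < C₀ := lt_of_lt_of_le one_pos hC₀
  set V : ℝ := (volume Ω).toReal with hV
  have hΩfin : volume Ω ≠ ⊤ := hΩb.measure_lt_top.ne
  have hΩpos : volume Ω ≠ 0 := (hΩo.measure_pos volume hΩne).ne'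
  have hVpos : 0 < V := ENNReal.toReal_pos hΩpos hΩfin
  -- pieces are contained in Ω
  have hsubΩ : ∀ n k, k < p ^ n → Ωf n k ⊆ Ω := by
    intro n
    induction n with
    | zero =>
      intro k hk
      simp only [pow_zero, Nat.lt_one_iff] at hk
      subst hk
      rw [h00]
    | succ n ih =>
      intro k hk
      have hk' : k / p < p ^ n := by
        rw [Nat.div_lt_iff_lt_mul hpnat]
        calc k < p ^ (n+1) := hk
        _ = p ^ n * p := pow_succ p n
      have hstep := hsub n (k / p) (k % p) hk' (Nat.mod_lt _ hpnat)
      rw [Nat.div_add_mod k p] at hstep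
      exact hstep.trans (ih _ hk')
  -- the pieces cover Ω up to a null set
  have hcov : ∀ n, volume (Ω \ ⋃ k ∈ Finset.range (p ^ n), Ωf n k) = 0 := by
    intro n
    induction n with
    | zero => simp [h00]
    | succ n ih =>
      apply measure_mono_null
        (t := (Ω \ ⋃ k ∈ Finset.range (p ^ n), Ωf n k) ∪
          ⋃ k ∈ Finset.range (p ^ n),
            (Ωf n k \ ⋃ j ∈ Finset.range p, Ωf (n + 1) (p * k + j)))
      · intro x hx
        obtain ⟨hxΩ, hxn⟩ := hx
        by_cases hx1 : x ∈ ⋃ k ∈ Finset.range (p ^ n), Ωf n k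
        · right
          simp only [Set.mem_iUnion, Finset.mem_range, exists_prop] at hx1
          obtain ⟨k, hk, hxk⟩ := hx1
          refine Set.mem_biUnion (Finset.mem_range.2 hk) ⟨hxk, ?_⟩
          intro hxj
          simp only [Set.mem_iUnion, Finset.mem_range, exists_prop] at hxj
          obtain ⟨j, hj, hxmem⟩ := hxj
          apply hxn
          have hlt : p * k + j < p ^ (n + 1) := by
            calc p * k + j < p * k + p := by omega
            _ = p * (k + 1) := by ring
            _ ≤ p * p ^ n := Nat.mul_le_mul_left p hk
            _ = p ^ (n + 1) := by rw [pow_succ]; ring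
          exact Set.mem_biUnion (Finset.mem_range.2 hlt) hxmem
        · exact Or.inl ⟨hxΩ, hx1⟩
      · apply measure_union_null ih
        refine (measure_biUnion_null_iff (Finset.range (p ^ n)).countable_toSet).2 ?_
        intro k hk
        exact hcover n k (by simpa using hk)
  -- the constant
  refine ⟨2 + 2 * Real.sqrt (c₂ * C₀ / V), by nlinarith [Real.sqrt_nonneg (c₂ * C₀ / V)], ?_⟩
  set C : ℝ := 2 + 2 * Real.sqrt (c₂ * C₀ / V) with hCdef
  have hCpos : 0 < C := by rw [hCdef]; positivity
  have hCsq : 4 * (c₂ * C₀ / V) ≤ C ^ 2 := by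
    have h1 : Real.sqrt (c₂ * C₀ / V) ^ 2 = c₂ * C₀ / V :=
      Real.sq_sqrt (by positivity)
    nlinarith [Real.sqrt_nonneg (c₂ * C₀ / V)]
  intro n coef f hf t ht
  set m : ℝ := C₀⁻¹ * V * (p:ℝ) ^ (-(n:ℝ)) with hmdef
  have hm : 0 < m := by positivity
  set S : ℝ≥0∞ := ∑ k ∈ Finset.range (p ^ n), ENNReal.ofReal (coef k ^ 2) with hSdef
  set I : ℝ≥0∞ := ∫⁻ x, (‖f x‖₊ : ℝ≥0∞) ^ (2:ℝ) ∂(volume.restrict Ω) with hIdef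
  -- value of f on each piece
  have hfval : ∀ k, k < p ^ n → ∀ x ∈ Ωf n k, f x = coef k := by
    intro k hk x hx
    rw [hf, Finset.sum_eq_single k]
    · exact Set.indicator_of_mem hx _
    · intro b hb hbk
      apply Set.indicator_of_notMem
      intro hxb
      exact Set.disjoint_left.1
        (hdisj n b k (by simpa using hb) hk hbk) hxb hx
    · intro hk'
      exact absurd (Finset.mem_range.2 hk) hk'
  -- lower bound for I
  have hSI : S * ENNReal.ofReal m ≤ I := by
    have hterm : ∀ k ∈ Finset.range (p ^ n),
        ENNReal.ofReal (coef k ^ 2) * ENNReal.ofReal m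
          ≤ ∫⁻ x in Ωf n k, (‖f x‖₊ : ℝ≥0∞) ^ (2:ℝ) ∂volume := by
      intro k hk
      have hk' : k < p ^ n := Finset.mem_range.1 hk
      have heq : ∫⁻ x in Ωf n k, (‖f x‖₊ : ℝ≥0∞) ^ (2:ℝ) ∂volume
          = ENNReal.ofReal (coef k ^ 2) * volume (Ωf n k) := by
        rw [setLIntegral_congr_fun_ae (hmeas n k hk')
          (ae_of_all _ (fun x hx => ?_)), setLIntegral_const]
        rw [hfval k hk' x hx, ← enorm_eq_nnnorm, Real.enorm_eq_ofReal_abs,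
          ENNReal.ofReal_rpow_of_nonneg (abs_nonneg _) (by norm_num)]
        congr 1
        rw [show ((2:ℝ)) = ((2:ℕ):ℝ) by norm_num, Real.rpow_natCast, sq_abs]
      rw [heq]
      refine mul_le_mul_right ?_ _
      exact ENNReal.ofReal_le_of_le_toReal (hA4 n k hk').1
    calc S * ENNReal.ofReal m
        = ∑ k ∈ Finset.range (p ^ n),
            ENNReal.ofReal (coef k ^ 2) * ENNReal.ofReal m := Finset.sum_mul ..
      _ ≤ ∑ k ∈ Finset.range (p ^ n),
            ∫⁻ x in Ωf n k, (‖f x‖₊ : ℝ≥0∞) ^ (2:ℝ) ∂volume :=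
          Finset.sum_le_sum hterm
      _ = ∫⁻ x in ⋃ k ∈ Finset.range (p ^ n), Ωf n k,
            (‖f x‖₊ : ℝ≥0∞) ^ (2:ℝ) ∂volume := by
          refine (lintegral_biUnion_finset ?_ ?_ _).symm
          · intro a ha b hb hab
            exact hdisj n a b (by simpa using ha) (by simpa using hb) hab
          · intro b hb
            exact hmeas n b (by simpa using hb)
      _ ≤ I := lintegral_mono_set
          (Set.iUnion₂_subset fun k hk => hsubΩ n k (by simpa using hk))
  have hS : S ≤ I * (ENNReal.ofReal m)⁻¹ := by
    have h1 : ENNReal.ofReal m ≠ 0 := (ENNReal.ofReal_pos.2 hm).ne'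
    calc S = S * (ENNReal.ofReal m * (ENNReal.ofReal m)⁻¹) := by
          rw [ENNReal.mul_inv_cancel h1 ENNReal.ofReal_ne_top, mul_one]
      _ = S * ENNReal.ofReal m * (ENNReal.ofReal m)⁻¹ := (mul_assoc _ _ _).symm
      _ ≤ I * (ENNReal.ofReal m)⁻¹ := mul_le_mul_left hSI _
  -- the key real inequality
  set K : ℝ := C * (p:ℝ) ^ ((n:ℝ) / (2 * (d:ℝ))) * t ^ ((1:ℝ)/2) with hKdef
  have hK0 : 0 ≤ K := by positivity
  set q : ℝ := c₂ * t * (p:ℝ) ^ (-((n:ℝ) * ((d:ℝ) - 1)) / (d:ℝ)) with hqdef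
  have hq0 : 0 < q := by positivity
  have hreal : 4 * q * m⁻¹ ≤ K ^ 2 := by
    set P1 : ℝ := (p:ℝ) ^ ((n:ℝ) / (d:ℝ)) with hP1
    have hP1pos : 0 < P1 := by positivity
    have hRpos : (0:ℝ) < (p:ℝ) ^ (-(n:ℝ)) := by positivity
    have hq1 : (p:ℝ) ^ (-((n:ℝ) * ((d:ℝ) - 1)) / (d:ℝ))
        = P1 * (p:ℝ) ^ (-(n:ℝ)) := by
      rw [hP1, ← Real.rpow_add hppos]
      congr 1
      field_simp
      ring
    have hq2 : ((p:ℝ) ^ ((n:ℝ) / (2 * (d:ℝ)))) ^ 2 = P1 := by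
      rw [← Real.rpow_natCast ((p:ℝ) ^ ((n:ℝ) / (2 * (d:ℝ)))) 2,
        ← Real.rpow_mul hppos.le]
      congr 1
      push_cast
      field_simp
    have hq3 : (t ^ ((1:ℝ)/2)) ^ 2 = t := by
      rw [← Real.rpow_natCast (t ^ ((1:ℝ)/2)) 2, ← Real.rpow_mul ht.le]
      norm_num
    have hKsq : K ^ 2 = C ^ 2 * P1 * t := by
      rw [hKdef, mul_pow, mul_pow, hq2, hq3]
    have hLHS : 4 * q * m⁻¹ = 4 * (c₂ * C₀ / V) * P1 * t := by
      rw [hqdef, hq1, hmdef]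
      field_simp
    rw [hKsq, hLHS]
    have := mul_le_mul_of_nonneg_right hCsq (le_of_lt (mul_pos hP1pos ht))
    calc 4 * (c₂ * C₀ / V) * P1 * t = 4 * (c₂ * C₀ / V) * (P1 * t) := by ring
      _ ≤ C ^ 2 * (P1 * t) := this
      _ = C ^ 2 * P1 * t := by ring
  -- norm of f
  have hfnorm : eLpNorm f 2 (volume.restrict Ω) = I ^ ((1:ℝ)/2) := by
    rw [eLpNorm_eq_lintegral_rpow_enorm_toReal two_ne_zero ENNReal.ofNat_ne_top]
    simp [hIdef]
    rfl
  rw [hfnorm]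
  -- bound each translate
  refine iSup₂_le fun h hh => ?_
  have hht : ‖h‖ ≤ t := hh
  set T : Set (EuclideanSpace ℝ (Fin d)) := Ω ∩ {x | x + h ∈ Ω} with hTdef
  have hTmeas : MeasurableSet T :=
    hΩo.measurableSet.inter (hΩo.measurableSet.preimage (measurable_add_const h))
  set A : ℕ → Set (EuclideanSpace ℝ (Fin d)) :=
    fun k => Ωf n k \ ((fun x => x + h) ⁻¹' Ωf n k) with hAdef
  set B : ℕ → Set (EuclideanSpace ℝ (Fin d)) :=
    fun k => ((fun x => x + h) ⁻¹' Ωf n k) \ Ωf n k with hBdef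
  have hAmeas : ∀ k, k < p ^ n → MeasurableSet (A k) := fun k hk =>
    (hmeas n k hk).diff ((hmeas n k hk).preimage (measurable_add_const h))
  have hBmeas : ∀ k, k < p ^ n → MeasurableSet (B k) := fun k hk =>
    ((hmeas n k hk).preimage (measurable_add_const h)).diff (hmeas n k hk)
  set δ : ℝ≥0∞ := ENNReal.ofReal q with hδdef
  have hδA : ∀ k, k < p ^ n → volume (A k) ≤ δ := by
    intro k hk
    have h6 := hA6 n k hk (-h)
    rw [image_add_eq_preimage', neg_neg] at h6
    refine h6.trans (ENNReal.ofReal_le_ofReal ?_)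
    rw [hqdef]
    have : (0:ℝ) ≤ (p:ℝ) ^ (-((n:ℝ) * ((d:ℝ) - 1)) / (d:ℝ)) := by positivity
    have hnn : ‖(-h : EuclideanSpace ℝ (Fin d))‖ = ‖h‖ := norm_neg h
    rw [hnn]
    nlinarith [norm_nonneg h]
  have hδB : ∀ k, k < p ^ n → volume (B k) ≤ δ := by
    intro k hk
    have hBtrans : volume (B k)
        = volume (Ωf n k \ ((fun x => x + (-h)) ⁻¹' Ωf n k)) := by
      rw [← measure_preimage_add_right volume h
        (Ωf n k \ ((fun x => x + (-h)) ⁻¹' Ωf n k))]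
      congr 1
      ext x
      simp only [hBdef, Set.mem_preimage, Set.mem_diff, Set.mem_preimage]
      constructor
      · rintro ⟨h1, h2⟩
        exact ⟨h1, by simpa using h2⟩
      · rintro ⟨h1, h2⟩
        exact ⟨h1, by simpa using h2⟩
    rw [hBtrans]
    have h6 := hA6 n k hk h
    rw [image_add_eq_preimage'] at h6
    refine h6.trans (ENNReal.ofReal_le_ofReal ?_)
    rw [hqdef]
    have : (0:ℝ) ≤ (p:ℝ) ^ (-((n:ℝ) * ((d:ℝ) - 1)) / (d:ℝ)) := by positivity
    nlinarith [norm_nonneg h]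
  -- the dominating function
  set G : EuclideanSpace ℝ (Fin d) → ℝ≥0∞ := fun x =>
    2 * ∑ k ∈ Finset.range (p ^ n), ENNReal.ofReal (coef k ^ 2) *
      ((A k).indicator (fun _ => (1:ℝ≥0∞)) x + (B k).indicator (fun _ => (1:ℝ≥0∞)) x)
    with hGdef
  -- pointwise a.e. bound
  have hpt : ∀ᵐ x ∂(volume.restrict T),
      (‖f (x + h) - f x‖₊ : ℝ≥0∞) ^ (2:ℝ) ≤ G x := by
    have hN : volume (Ω \ ⋃ k ∈ Finset.range (p ^ n), Ωf n k) = 0 := hcov n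
    set N : Set (EuclideanSpace ℝ (Fin d)) :=
      Ω \ ⋃ k ∈ Finset.range (p ^ n), Ωf n k with hNdef
    have hN1 : ∀ᵐ x ∂(volume.restrict T), x ∉ N := by
      refine measure_eq_zero_iff_ae_notMem.1 (le_antisymm ?_ zero_le)
      exact le_trans (Measure.restrict_le_self _) hN.le
    have hN2 : ∀ᵐ x ∂(volume.restrict T), x + h ∉ N := by
      have : volume ((fun x => x + h) ⁻¹' N) = 0 := by
        rw [measure_preimage_add_right]; exact hN
      refine measure_eq_zero_iff_ae_notMem.1 (le_antisymm ?_ zero_le)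
      exact le_trans (Measure.restrict_le_self _) this.le
    filter_upwards [ae_restrict_mem hTmeas, hN1, hN2] with x hxT hx1 hx2
    obtain ⟨hxΩ, hxhΩ⟩ := hxT
    have hxU : x ∈ ⋃ k ∈ Finset.range (p ^ n), Ωf n k := by
      by_contra hcon; exact hx1 ⟨hxΩ, hcon⟩
    have hxhU : x + h ∈ ⋃ k ∈ Finset.range (p ^ n), Ωf n k := by
      by_contra hcon; exact hx2 ⟨hxhΩ, hcon⟩
    simp only [Set.mem_iUnion, Finset.mem_range, exists_prop] at hxU hxhU
    obtain ⟨k0, hk0, hxk0⟩ := hxU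
    obtain ⟨k1, hk1, hxk1⟩ := hxhU
    have hfx : f x = coef k0 := hfval k0 hk0 x hxk0
    have hfxh : f (x + h) = coef k1 := hfval k1 hk1 _ hxk1
    by_cases hkk : k0 = k1
    · subst hkk
      rw [hfx, hfxh, sub_self]
      simp only [nnnorm_zero, ENNReal.coe_zero]
      rw [ENNReal.zero_rpow_of_pos (by norm_num)]
      exact zero_le
    · have hxA : x ∈ A k0 := by
        refine ⟨hxk0, fun hcon => ?_⟩
        exact Set.disjoint_left.1 (hdisj n k0 k1 hk0 hk1 hkk) hcon hxk1
      have hxB : x ∈ B k1 := by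
        refine ⟨hxk1, fun hcon => ?_⟩
        exact Set.disjoint_left.1 (hdisj n k0 k1 hk0 hk1 hkk) hxk0 hcon
      have hsum : ENNReal.ofReal (coef k0 ^ 2) + ENNReal.ofReal (coef k1 ^ 2)
          ≤ ∑ k ∈ Finset.range (p ^ n), ENNReal.ofReal (coef k ^ 2) *
            ((A k).indicator (fun _ => (1:ℝ≥0∞)) x +
              (B k).indicator (fun _ => (1:ℝ≥0∞)) x) := by
        have hsub2 : ({k0, k1} : Finset ℕ) ⊆ Finset.range (p ^ n) := by
          intro a ha
          simp only [Finset.mem_insert, Finset.mem_singleton] at ha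
          rcases ha with rfl | rfl
          · exact Finset.mem_range.2 hk0
          · exact Finset.mem_range.2 hk1
        calc ENNReal.ofReal (coef k0 ^ 2) + ENNReal.ofReal (coef k1 ^ 2)
            ≤ ∑ k ∈ ({k0, k1} : Finset ℕ), ENNReal.ofReal (coef k ^ 2) *
              ((A k).indicator (fun _ => (1:ℝ≥0∞)) x +
                (B k).indicator (fun _ => (1:ℝ≥0∞)) x) := by
              rw [Finset.sum_pair hkk]
              refine add_le_add ?_ ?_
              · rw [Set.indicator_of_mem hxA]
                calc ENNReal.ofReal (coef k0 ^ 2)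
                    = ENNReal.ofReal (coef k0 ^ 2) * 1 := (mul_one _).symm
                  _ ≤ _ := mul_le_mul_right le_self_add _
              · rw [Set.indicator_of_mem hxB]
                calc ENNReal.ofReal (coef k1 ^ 2)
                    = ENNReal.ofReal (coef k1 ^ 2) * 1 := (mul_one _).symm
                  _ ≤ _ := mul_le_mul_right le_add_self _
          _ ≤ _ := Finset.sum_le_sum_of_subset hsub2
      calc (‖f (x + h) - f x‖₊ : ℝ≥0∞) ^ (2:ℝ)
          = ENNReal.ofReal ((coef k1 - coef k0) ^ 2) := by
            rw [hfx, hfxh, ← enorm_eq_nnnorm, Real.enorm_eq_ofReal_abs,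
              ENNReal.ofReal_rpow_of_nonneg (abs_nonneg _) (by norm_num)]
            congr 1
            rw [show ((2:ℝ)) = ((2:ℕ):ℝ) by norm_num, Real.rpow_natCast, sq_abs]
        _ ≤ ENNReal.ofReal (2 * coef k0 ^ 2 + 2 * coef k1 ^ 2) :=
            ENNReal.ofReal_le_ofReal (by nlinarith [sq_nonneg (coef k1 + coef k0)])
        _ = 2 * (ENNReal.ofReal (coef k0 ^ 2) + ENNReal.ofReal (coef k1 ^ 2)) := by
            rw [ENNReal.ofReal_add (by positivity) (by positivity),
              ENNReal.ofReal_mul (by norm_num), ENNReal.ofReal_mul (by norm_num)]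
            rw [ENNReal.ofReal_ofNat]
            ring
        _ ≤ G x := by
            rw [hGdef]
            exact mul_le_mul_right hsum 2
  -- integral bound
  have hInt : ∫⁻ x, (‖f (x + h) - f x‖₊ : ℝ≥0∞) ^ (2:ℝ) ∂(volume.restrict T)
      ≤ 4 * δ * S := by
    calc ∫⁻ x, (‖f (x + h) - f x‖₊ : ℝ≥0∞) ^ (2:ℝ) ∂(volume.restrict T)
        ≤ ∫⁻ x, G x ∂(volume.restrict T) := lintegral_mono_ae hpt
      _ ≤ ∫⁻ x, G x ∂volume := lintegral_mono' (Measure.restrict_le_self) le_rfl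
      _ = 2 * ∑ k ∈ Finset.range (p ^ n), ENNReal.ofReal (coef k ^ 2) *
            (volume (A k) + volume (B k)) := by
          rw [hGdef]
          rw [lintegral_const_mul' _ _ ENNReal.ofNat_ne_top]
          congr 1
          rw [lintegral_finset_sum]
          · refine Finset.sum_congr rfl fun k hk => ?_
            have hk' : k < p ^ n := Finset.mem_range.1 hk
            rw [lintegral_const_mul' _ _ ENNReal.ofReal_ne_top]
            congr 1
            rw [lintegral_add_left ((measurable_const.indicator (hAmeas k hk')))]
            rw [lintegral_indicator (hAmeas k hk'), lintegral_indicator (hBmeas k hk'),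
              setLIntegral_one, setLIntegral_one]
          · intro k hk
            have hk' : k < p ^ n := Finset.mem_range.1 hk
            exact ((measurable_const.indicator (hAmeas k hk')).add
              (measurable_const.indicator (hBmeas k hk'))).const_mul _
      _ ≤ 2 * ∑ k ∈ Finset.range (p ^ n),
            ENNReal.ofReal (coef k ^ 2) * (δ + δ) := by
          gcongr 2 * ∑ k ∈ Finset.range (p ^ n), ENNReal.ofReal (coef k ^ 2) * (?_ + ?_)
            with k hk <;>
          [exact hδA k (Finset.mem_range.1 hk); exact hδB k (Finset.mem_range.1 hk)]
      _ = 4 * δ * S := by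
          rw [hSdef, ← Finset.sum_mul]
          ring
  -- conclude
  have hKey : (4 * δ * (ENNReal.ofReal m)⁻¹) ^ ((1:ℝ)/2) ≤ ENNReal.ofReal K := by
    have e1 : ENNReal.ofReal (4 * q * m⁻¹) = 4 * δ * (ENNReal.ofReal m)⁻¹ := by
      rw [ENNReal.ofReal_mul (by positivity), ENNReal.ofReal_mul (by norm_num : (0:ℝ) ≤ 4),
        ← ENNReal.ofReal_inv_of_pos hm, ENNReal.ofReal_ofNat, hδdef,
        ENNReal.ofReal_inv_of_pos hm]
    rw [← e1, ENNReal.ofReal_rpow_of_nonneg (by positivity) (by norm_num)]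
    refine ENNReal.ofReal_le_ofReal ?_
    have h1 : (4 * q * m⁻¹) ^ ((1:ℝ)/2) ≤ (K ^ 2) ^ ((1:ℝ)/2) :=
      Real.rpow_le_rpow (by positivity) hreal (by norm_num)
    have h2 : (K ^ 2) ^ ((1:ℝ)/2) = K := by
      rw [← Real.rpow_natCast K 2, ← Real.rpow_mul hK0]
      norm_num
    rwa [h2] at h1
  calc eLpNorm (fun x => f (x + h) - f x) 2 (volume.restrict T)
      = (∫⁻ x, (‖f (x + h) - f x‖₊ : ℝ≥0∞) ^ (2:ℝ) ∂(volume.restrict T)) ^ ((1:ℝ)/2) := by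
        rw [eLpNorm_eq_lintegral_rpow_enorm_toReal two_ne_zero ENNReal.ofNat_ne_top]
        norm_num
        rfl
    _ ≤ (4 * δ * S) ^ ((1:ℝ)/2) := ENNReal.rpow_le_rpow hInt (by norm_num)
    _ ≤ ((4 * δ * (ENNReal.ofReal m)⁻¹) * I) ^ ((1:ℝ)/2) := by
        refine ENNReal.rpow_le_rpow ?_ (by norm_num)
        calc 4 * δ * S ≤ 4 * δ * (I * (ENNReal.ofReal m)⁻¹) := mul_le_mul_right hS _
          _ = 4 * δ * (ENNReal.ofReal m)⁻¹ * I := by ring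
    _ = (4 * δ * (ENNReal.ofReal m)⁻¹) ^ ((1:ℝ)/2) * I ^ ((1:ℝ)/2) :=
        ENNReal.mul_rpow_of_nonneg _ _ (by norm_num)
    _ ≤ ENNReal.ofReal K * I ^ ((1:ℝ)/2) := mul_le_mul_left hKey _
end

section
/- Let H be a Hilbert space with a decomposition into closed mutually orthogonal subspaces H = ⊕_{n=0}^∞ U_n, with orthogonal projections Q_n onto U_n and P_n := Q_0 + ... + Q_n. Fix b > 1 and r > 0. For f ∈ H define ‖f‖²_A := ‖P_0 f‖² + ∑_{n=0}^∞ b^{2nr} ‖f - P_n f‖² and ‖f‖²_Z := ∑_{n=0}^∞ b^{2nr} ‖Q_n f‖². Then ‖f‖²_Z ≤ b^{2r} ‖f‖²_A and ‖f‖²_A ≤ max(1, 1/(b^{2r}-1)) ‖f‖²_Z; in particular, ‖f‖_A < ∞ iff ‖f‖_Z < ∞. -/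
open scoped ENNReal InnerProductSpace

private lemma norm_sq_sum_of_orth {H : Type*} [NormedAddCommGroup H] [InnerProductSpace ℝ H]
    (v : ℕ → H) (h : ∀ i j, i ≠ j → ⟪v i, v j⟫_ℝ = 0) (s : Finset ℕ) :
    ‖∑ i ∈ s, v i‖ ^ 2 = ∑ i ∈ s, ‖v i‖ ^ 2 := by
  rw [← real_inner_self_eq_norm_sq, sum_inner]
  refine Finset.sum_congr rfl fun i hi => ?_
  rw [inner_sum, Finset.sum_eq_single_of_mem i hi fun j hj hji => h i j (Ne.symm hji),
    real_inner_self_eq_norm_sq]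

private lemma hasSum_norm_sq_of_orth {H : Type*} [NormedAddCommGroup H] [InnerProductSpace ℝ H]
    (v : ℕ → H) (h : ∀ i j, i ≠ j → ⟪v i, v j⟫_ℝ = 0) {x : H} (hx : HasSum v x) :
    HasSum (fun i => ‖v i‖ ^ 2) (‖x‖ ^ 2) := by
  have hcont : Filter.Tendsto (fun y : H => ‖y‖ ^ 2) (nhds x) (nhds (‖x‖ ^ 2)) :=
    ((continuous_pow 2).comp continuous_norm).continuousAt
  have hT := hcont.comp hx
  have heq : ((fun y : H => ‖y‖ ^ 2) ∘ fun s : Finset ℕ => ∑ i ∈ s, v i)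
      = fun s : Finset ℕ => ∑ i ∈ s, ‖v i‖ ^ 2 := by
    funext s
    simp only [Function.comp_apply]
    exact norm_sq_sum_of_orth v h s
  rw [HasSum]
  rwa [heq] at hT

set_option maxHeartbeats 1000000 in
/-- Abstract Hilbert-space form of the equivalence of the two approximation-space
norms: if `f = ∑ u_n` with the `u_n` mutually orthogonal (so `P_n f = ∑_{k≤n} u_k`
and `Q_n f = u_n`), then with `A = ‖P_0 f‖² + ∑_n b^{2nr}‖f - P_n f‖²` and
`Z = ∑_n b^{2nr}‖Q_n f‖²` one has `Z ≤ b^{2r} A`, `A ≤ max(1, 1/(b^{2r}-1)) Z`,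
and in particular `A < ∞ ↔ Z < ∞`. -/
theorem approximation_norm_equivalence_hilbert
    {H : Type*} [NormedAddCommGroup H] [InnerProductSpace ℝ H] [CompleteSpace H]
    (b r : ℝ) (hb : 1 < b) (hr : 0 < r)
    (u : ℕ → H) (horth : ∀ i j, i ≠ j → ⟪u i, u j⟫_ℝ = 0)
    (f : H) (hf : HasSum u f)
    (A Z : ℝ≥0∞)
    (hA : A = ENNReal.ofReal (‖u 0‖ ^ 2) +
      ∑' n : ℕ, ENNReal.ofReal (b ^ (2 * (n : ℝ) * r)) *
        ENNReal.ofReal (‖f - ∑ k ∈ Finset.range (n + 1), u k‖ ^ 2))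
    (hZ : Z = ∑' n : ℕ, ENNReal.ofReal (b ^ (2 * (n : ℝ) * r)) *
      ENNReal.ofReal (‖u n‖ ^ 2)) :
    Z ≤ ENNReal.ofReal (b ^ (2 * r)) * A ∧
    A ≤ max 1 (ENNReal.ofReal (1 / (b ^ (2 * r) - 1))) * Z ∧
    (A < ⊤ ↔ Z < ⊤) := by
  classical
  have hb0 : (0:ℝ) < b := one_pos.trans hb
  set c : ℝ := b ^ (2 * r) with hcdef
  have hc1 : 1 < c := by
    rw [hcdef]
    exact (Real.one_lt_rpow_iff_of_pos hb0).mpr (Or.inl ⟨hb, by positivity⟩)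
  have hc0 : (0:ℝ) ≤ c := by linarith
  set C : ℝ≥0∞ := ENNReal.ofReal c with hCdef
  have hC1 : (1:ℝ≥0∞) ≤ C := by
    rw [hCdef]; exact ENNReal.one_le_ofReal.mpr hc1.le
  have hCtop : C < ⊤ := by rw [hCdef]; exact ENNReal.ofReal_lt_top
  set e : ℕ → ℝ≥0∞ := fun n => ENNReal.ofReal (‖u n‖ ^ 2) with hedef
  set M : ℝ≥0∞ := max 1 (ENNReal.ofReal (1 / (c - 1))) with hMdef
  have hM1 : (1:ℝ≥0∞) ≤ M := le_max_left _ _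
  have hMtop : M < ⊤ := max_lt ENNReal.one_lt_top ENNReal.ofReal_lt_top
  -- coefficients
  have hcoef : ∀ n : ℕ, ENNReal.ofReal (b ^ (2 * (n : ℝ) * r)) = C ^ n := by
    intro n
    have h1 : b ^ (2 * (n : ℝ) * r) = c ^ n := by
      rw [hcdef, show (2 * (n : ℝ) * r) = (2 * r) * (n : ℝ) from by ring,
        Real.rpow_mul hb0.le, Real.rpow_natCast]
    rw [h1, ENNReal.ofReal_pow hc0, hCdef]
  -- tails
  have htail : ∀ n : ℕ,
      ENNReal.ofReal (‖f - ∑ k ∈ Finset.range (n + 1), u k‖ ^ 2) = ∑' k, e (k + (n + 1)) := by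
    intro n
    have hs : HasSum (fun k => u (k + (n + 1))) (f - ∑ k ∈ Finset.range (n + 1), u k) :=
      (hasSum_nat_add_iff' (n + 1)).mpr hf
    have horth' : ∀ i j, i ≠ j → ⟪u (i + (n + 1)), u (j + (n + 1))⟫_ℝ = 0 := fun i j hij =>
      horth _ _ (by omega)
    have h2 := hasSum_norm_sq_of_orth _ horth' hs
    rw [← h2.tsum_eq, ENNReal.ofReal_tsum_of_nonneg (fun k => sq_nonneg _) h2.summable]
  have hA' : A = e 0 + ∑' n : ℕ, C ^ n * (∑' k, e (k + (n + 1))) := by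
    rw [hA]
    congr 1
    exact tsum_congr fun n => by rw [hcoef n, htail n]
  have hZ' : Z = ∑' n : ℕ, C ^ n * e n := by
    rw [hZ]
    exact tsum_congr fun n => by rw [hcoef n]
  -- reindexing
  set F : ℕ → ℕ → ℝ≥0∞ := fun n m => if n < m then C ^ n * e m else 0 with hFdef
  have hstep1 : ∀ n : ℕ, C ^ n * (∑' k, e (k + (n + 1))) = ∑' m, F n m := by
    intro n
    rw [← ENNReal.tsum_mul_left]
    have hinj : Function.Injective (fun k : ℕ => k + (n + 1)) := add_left_injective (n + 1)
    have hsupp : Function.support (F n) ⊆ Set.range (fun k : ℕ => k + (n + 1)) := by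
      intro m hm
      have hlt : n < m := by
        by_contra hcon
        exact hm (by simp only [hFdef]; rw [if_neg hcon])
      exact ⟨m - (n + 1), by show m - (n + 1) + (n + 1) = m; omega⟩
    rw [← hinj.tsum_eq hsupp]
    refine tsum_congr fun k => ?_
    simp only [hFdef]
    rw [if_pos (by omega : n < k + (n + 1))]
  have hstep2 : (∑' n, ∑' m, F n m) = ∑' m, (∑ i ∈ Finset.range m, C ^ i) * e m := by
    rw [ENNReal.tsum_comm]
    refine tsum_congr fun m => ?_
    have h0 : (∑' n, F n m) = ∑ n ∈ Finset.range m, F n m :=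
      tsum_eq_sum fun n hn => by
        simp only [hFdef]
        rw [if_neg fun h => hn (Finset.mem_range.mpr h)]
    rw [h0, Finset.sum_mul]
    exact Finset.sum_congr rfl fun n hn => by
      simp only [hFdef]; rw [if_pos (Finset.mem_range.mp hn)]
  have hkey : (∑' n : ℕ, C ^ n * (∑' k, e (k + (n + 1))))
      = ∑' m, (∑ i ∈ Finset.range m, C ^ i) * e m :=
    (tsum_congr hstep1).trans hstep2
  -- geometric bound
  have hgeom : ∀ m : ℕ, (∑ i ∈ Finset.range m, C ^ i) ≤ M * C ^ m := by
    intro m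
    have hc1' : (0:ℝ) < c - 1 := by linarith
    have hreal : (∑ i ∈ Finset.range m, c ^ i) ≤ (1 / (c - 1)) * c ^ m := by
      rw [geom_sum_eq hc1.ne' m]
      have h1 : (c ^ m - 1) / (c - 1) ≤ c ^ m / (c - 1) := by
        gcongr
        linarith
      calc (c ^ m - 1) / (c - 1) ≤ c ^ m / (c - 1) := h1
        _ = (1 / (c - 1)) * c ^ m := by ring
    calc (∑ i ∈ Finset.range m, C ^ i)
        = ∑ i ∈ Finset.range m, ENNReal.ofReal (c ^ i) :=
          Finset.sum_congr rfl fun i _ => by rw [ENNReal.ofReal_pow hc0, hCdef]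
      _ = ENNReal.ofReal (∑ i ∈ Finset.range m, c ^ i) :=
          (ENNReal.ofReal_sum_of_nonneg fun i _ => pow_nonneg hc0 i).symm
      _ ≤ ENNReal.ofReal ((1 / (c - 1)) * c ^ m) := ENNReal.ofReal_le_ofReal hreal
      _ = ENNReal.ofReal (1 / (c - 1)) * ENNReal.ofReal (c ^ m) :=
          ENNReal.ofReal_mul (div_nonneg zero_le_one hc1'.le)
      _ = ENNReal.ofReal (1 / (c - 1)) * C ^ m := by rw [ENNReal.ofReal_pow hc0, hCdef]
      _ ≤ M * C ^ m := by gcongr; exact le_max_right _ _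
  -- first inequality
  have hZA : Z ≤ C * A := by
    have hsplitZ : (∑' n : ℕ, C ^ n * e n)
        = C ^ 0 * e 0 + ∑' n : ℕ, C ^ (n + 1) * e (n + 1) :=
      tsum_eq_zero_add' ENNReal.summable
    rw [hZ', hsplitZ, hA', mul_add]
    refine add_le_add ?_ ?_
    · rw [pow_zero, one_mul]
      exact le_mul_of_one_le_left zero_le hC1
    · rw [← ENNReal.tsum_mul_left]
      refine ENNReal.tsum_le_tsum fun n => ?_
      have h1 : e (n + 1) ≤ ∑' k, e (k + (n + 1)) := by
        simpa using ENNReal.le_tsum (f := fun k => e (k + (n + 1))) 0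
      calc C ^ (n + 1) * e (n + 1) = C * (C ^ n * e (n + 1)) := by ring
        _ ≤ C * (C ^ n * (∑' k, e (k + (n + 1)))) := by gcongr
  -- second inequality
  have hAZ : A ≤ M * Z := by
    have hAeq : A = e 0 + ∑' m : ℕ, (∑ i ∈ Finset.range (m + 1), C ^ i) * e (m + 1) := by
      have hsplitS : (∑' m : ℕ, (∑ i ∈ Finset.range m, C ^ i) * e m)
          = (∑ i ∈ Finset.range 0, C ^ i) * e 0
            + ∑' m : ℕ, (∑ i ∈ Finset.range (m + 1), C ^ i) * e (m + 1) :=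
        tsum_eq_zero_add' ENNReal.summable
      rw [hA', hkey, hsplitS]
      simp
    have hMZ : M * Z = M * (C ^ 0 * e 0) + ∑' m : ℕ, M * (C ^ (m + 1) * e (m + 1)) := by
      have hsplitZ : (∑' n : ℕ, C ^ n * e n)
          = C ^ 0 * e 0 + ∑' n : ℕ, C ^ (n + 1) * e (n + 1) :=
        tsum_eq_zero_add' ENNReal.summable
      rw [hZ', hsplitZ, mul_add, ENNReal.tsum_mul_left]
    rw [hAeq, hMZ]
    refine add_le_add ?_ (ENNReal.tsum_le_tsum fun m => ?_)
    · rw [pow_zero, one_mul]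
      exact le_mul_of_one_le_left zero_le hM1
    · rw [← mul_assoc]
      gcongr; exact hgeom (m + 1)
  exact ⟨hZA, hAZ,
    ⟨fun h => lt_of_le_of_lt hZA (ENNReal.mul_lt_top hCtop h),
     fun h => lt_of_le_of_lt hAZ (ENNReal.mul_lt_top hMtop h)⟩⟩
end

section
/- Let ℓ ∈ (0,1), α > 0, p ≥ 2 with ℓ < αp < 1/ℓ, and let F_rad be the normalized radial harmonic function on (0,L) (with F_rad' = √(1-ℓ/(αp))/q, F_rad(0)=0, q(t)=(αp)^n on (t_{n-1},t_n)). Then ‖F_rad‖²_{L²((0,L), q dt)} = (1 - ℓ/(αp)) · [ (1/3)∑_{n=0}^∞ (ℓ³/(αp))^n + ∑_{n=0}^∞ ℓ^{2n} (1-(ℓ/(αp))^n)/(1-ℓ/(αp)) + ∑_{n=0}^∞ (αpℓ)^n ((1-(ℓ/(αp))^n)/(1-ℓ/(αp)))² ], and all three series converge (using ℓ<1, ℓ³<αp, αpℓ<1); in particular F_rad ∈ L²((0,L), q dt). -/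
open MeasureTheory
open scoped ENNReal

lemma radial_aux_int (a h c S d : ℝ) (h0 : 0 ≤ h) :
    (∫ t in Set.Ioo a (a+h), ((t-a)*c + S)^2 * d)
      = d*c^2*h^3/3 + d*c*S*h^2 + d*S^2*h := by
  rw [← MeasureTheory.integral_Ioc_eq_integral_Ioo,
    ← intervalIntegral.integral_of_le (by linarith)]
  have hG : ∀ x : ℝ, HasDerivAt
      (fun x : ℝ => d*c^2/3*(x-a)^3 + d*c*S*(x-a)^2 + d*S^2*(x-a))
      (((x-a)*c + S)^2*d) x := by
    intro x
    have h1 : HasDerivAt (fun x : ℝ => x - a) 1 x := (hasDerivAt_id x).sub_const a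
    have h3 := (h1.pow 3).const_mul (d*c^2/3)
    have h2 := (h1.pow 2).const_mul (d*c*S)
    have hlin := h1.const_mul (d*S^2)
    have := (h3.add h2).add hlin
    convert this using 1
    · rfl
    · rfl
    · funext y; simp only [Pi.add_apply, Pi.pow_apply]
    · push_cast
      ring
  rw [intervalIntegral.integral_eq_sub_of_hasDerivAt (fun x _ => hG x)
    (Continuous.intervalIntegrable (by continuity) _ _)]
  ring

set_option maxHeartbeats 1000000 in
/-- Squared weighted `L²`-norm of the normalized radial harmonic function `F_rad`:
it equals
`(1-ℓ/(αp))[(1/3)∑(ℓ³/(αp))^n + ∑ ℓ^{2n}(1-(ℓ/(αp))^n)/(1-ℓ/(αp))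
 + ∑ (αpℓ)^n((1-(ℓ/(αp))^n)/(1-ℓ/(αp)))²]`,
all three series converge, and in particular `F_rad ∈ L²((0,L), q dt)`. -/
theorem radial_harmonic_L2_norm (ℓ α : ℝ) (p : ℕ) (hℓ0 : 0 < ℓ) (hℓ1 : ℓ < 1)
    (hα : 0 < α) (hp : 2 ≤ p) (hlap : ℓ < α * p) (hlap' : α * p < 1 / ℓ)
    (T : ℕ → ℝ) (hT : ∀ n, T n = ∑ k ∈ Finset.range n, ℓ ^ k)
    (L : ℝ) (hL : L = 1 / (1 - ℓ))
    (q : ℝ → ℝ) (hq0 : ∀ t, 0 < q t)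
    (hq : ∀ n : ℕ, ∀ t ∈ Set.Ioo (T n) (T (n + 1)), q t = (α * p) ^ n)
    (F : ℝ → ℝ)
    (hF : ∀ n : ℕ, ∀ t ∈ Set.Icc (T n) (T (n + 1)),
      F t = Real.sqrt (1 - ℓ / (α * p)) *
        ((t - T n) / (α * p) ^ n + ∑ k ∈ Finset.range n, (ℓ / (α * p)) ^ k)) :
    Summable (fun n : ℕ => (ℓ ^ 3 / (α * p)) ^ n) ∧
    Summable (fun n : ℕ =>
      ℓ ^ (2 * n) * (1 - (ℓ / (α * p)) ^ n) / (1 - ℓ / (α * p))) ∧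
    Summable (fun n : ℕ =>
      (α * p * ℓ) ^ n * ((1 - (ℓ / (α * p)) ^ n) / (1 - ℓ / (α * p))) ^ 2) ∧
    (∫⁻ t in Set.Ioo 0 L, ENNReal.ofReal (F t ^ 2 * q t))
      = ENNReal.ofReal ((1 - ℓ / (α * p)) *
          ((1 / 3) * (∑' n : ℕ, (ℓ ^ 3 / (α * p)) ^ n) +
            (∑' n : ℕ, ℓ ^ (2 * n) * (1 - (ℓ / (α * p)) ^ n) / (1 - ℓ / (α * p))) +
            (∑' n : ℕ, (α * p * ℓ) ^ n *
              ((1 - (ℓ / (α * p)) ^ n) / (1 - ℓ / (α * p))) ^ 2))) ∧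
    (∫⁻ t in Set.Ioo 0 L, ENNReal.ofReal (F t ^ 2 * q t)) < ⊤ := by
  classical
  have hp2 : (2:ℝ) ≤ (p:ℝ) := by exact_mod_cast hp
  set A : ℝ := α * p with hA_def
  have hA : 0 < A := mul_pos hα (by linarith)
  have hr1 : ℓ / A < 1 := (div_lt_one hA).2 hlap
  have hr0 : 0 < ℓ / A := div_pos hℓ0 hA
  have h1r : 0 < 1 - ℓ/A := by linarith
  have h1ℓ : 0 < 1 - ℓ := by linarith
  have hAl : 0 < A * ℓ := mul_pos hA hℓ0
  have hAl1 : A * ℓ < 1 := by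
    have h1 : A * ℓ < (1/ℓ) * ℓ := by nlinarith
    have h2 : (1/ℓ) * ℓ = 1 := by field_simp
    linarith
  have hl3A : ℓ^3 / A < 1 := by
    rw [div_lt_one hA]
    have hℓ2 : ℓ^2 < 1 := by nlinarith
    nlinarith
  have hl3A0 : 0 ≤ ℓ^3 / A := (div_pos (pow_pos hℓ0 3) hA).le
  -- geometric partial sums
  set r : ℝ := ℓ / A with hr_def
  set S : ℕ → ℝ := fun n => ∑ k ∈ Finset.range n, r ^ k with hS_def
  have hSform : ∀ n, S n = (1 - r^n) / (1 - r) := by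
    intro n
    have := geom_sum_eq (x := r) (by intro h; rw [h] at hr1; exact lt_irrefl 1 hr1) n
    rw [hS_def]; simp only []; rw [this]
    have h1 : r - 1 ≠ 0 := by intro h; apply absurd (by linarith : r = 1); intro h'; linarith
    field_simp
    ring
  have hSnonneg : ∀ n, 0 ≤ S n := by
    intro n; rw [hSform]
    have h1 : r ^ n ≤ 1 := pow_le_one₀ hr0.le hr1.le
    exact div_nonneg (by linarith) h1r.le
  have hSle : ∀ n, S n ≤ 1 / (1 - r) := by
    intro n; rw [hSform]
    exact (div_le_div_iff_of_pos_right h1r).2 (by linarith [pow_nonneg hr0.le n])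
  -- T facts
  have hT0 : T 0 = 0 := by simp [hT]
  have hTstep : ∀ n, T (n+1) = T n + ℓ^n := by
    intro n; rw [hT, hT, Finset.sum_range_succ]
  have hTform : ∀ n, T n = (1 - ℓ^n) / (1 - ℓ) := by
    intro n
    rw [hT, geom_sum_eq (by linarith : ℓ ≠ 1)]
    have h1 : ℓ - 1 ≠ 0 := by intro h; linarith [sub_eq_zero.1 h]
    field_simp; ring
  have hTnonneg : ∀ n, 0 ≤ T n := by
    intro n; rw [hTform]
    have h1 : ℓ ^ n ≤ 1 := pow_le_one₀ hℓ0.le hℓ1.le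
    exact div_nonneg (by linarith) h1ℓ.le
  have hTL : ∀ n, T n ≤ L := by
    intro n; rw [hTform, hL]
    exact (div_le_div_iff_of_pos_right h1ℓ).2 (by linarith [pow_nonneg hℓ0.le n])
  have hTmono : Monotone T := by
    apply monotone_nat_of_le_succ
    intro n; rw [hTstep]
    nlinarith [pow_pos hℓ0 n]
  -- covering
  have hsub : (⋃ n, Set.Ioo (T n) (T (n+1))) ⊆ Set.Ioo 0 L := by
    intro t ht
    obtain ⟨n, hn⟩ := Set.mem_iUnion.1 ht
    exact ⟨lt_of_le_of_lt (hTnonneg n) hn.1, lt_of_lt_of_le hn.2 (hTL (n+1))⟩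
  have hcover : Set.Ioo 0 L ⊆ (⋃ n, Set.Ioo (T n) (T (n+1))) ∪ Set.range T := by
    intro t ht
    by_cases hmem : t ∈ Set.range T
    · exact Or.inr hmem
    · left
      have hL1 : L * (1 - ℓ) = 1 := by rw [hL]; field_simp
      have hex : ∃ n, t < T n := by
        obtain ⟨n, hn⟩ := exists_pow_lt_of_lt_one
          (x := (L - t) * (1 - ℓ)) (by nlinarith [ht.2] : (0:ℝ) < (L - t) * (1-ℓ)) hℓ1
        refine ⟨n, ?_⟩
        rw [hTform, lt_div_iff₀ h1ℓ]
        nlinarith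
      have hn := Nat.find_spec hex
      set n := Nat.find hex with hn_def
      have hn0 : n ≠ 0 := by
        intro h
        rw [h, hT0] at hn
        exact absurd hn (not_lt.2 ht.1.le)
      obtain ⟨m, hm⟩ := Nat.exists_eq_succ_of_ne_zero hn0
      have hmlt : ¬ t < T m := Nat.find_min hex (by omega)
      have hTm : T m ≤ t := not_lt.1 hmlt
      have hTmne : T m ≠ t := fun h => hmem ⟨m, h⟩
      refine Set.mem_iUnion.2 ⟨m, lt_of_le_of_ne hTm hTmne, ?_⟩
      have h5 : T n = T (m+1) := by rw [hm]
      rw [← h5]; exact hn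
  have haeeq : Set.Ioo 0 L =ᵐ[(volume : Measure ℝ)] ⋃ n, Set.Ioo (T n) (T (n+1)) := by
    rw [MeasureTheory.ae_eq_set]
    constructor
    · refine measure_mono_null ?_ ((Set.countable_range T).measure_zero (volume : Measure ℝ))
      intro t ht
      rcases hcover ht.1 with h | h
      · exact absurd h ht.2
      · exact h
    · rw [Set.diff_eq_empty.2 hsub]; simp
  have hdisj : Pairwise (Function.onFun Disjoint fun n => Set.Ioo (T n) (T (n+1))) := by
    intro m n hmn
    rcases lt_or_gt_of_ne hmn with h | h
    · rw [Function.onFun, Set.Ioo_disjoint_Ioo]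
      exact le_trans (min_le_left _ _) (le_trans (hTmono h) (le_max_right _ _))
    · rw [Function.onFun, Set.Ioo_disjoint_Ioo]
      exact le_trans (min_le_right _ _) (le_trans (hTmono h) (le_max_left _ _))
  -- per interval
  set term : ℕ → ℝ := fun n =>
    (1 - r) * ((ℓ^n)^3/A^n/3 + (ℓ^n)^2 * S n + (A*ℓ)^n * (S n)^2) with hterm_def
  have hAn : ∀ n : ℕ, (0:ℝ) < A ^ n := fun n => pow_pos hA n
  have hint : ∀ n, (∫⁻ t in Set.Ioo (T n) (T (n+1)), ENNReal.ofReal (F t ^ 2 * q t))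
      = ENNReal.ofReal (term n) := by
    intro n
    have hcong : ∀ t ∈ Set.Ioo (T n) (T (n+1)),
        ENNReal.ofReal (F t ^ 2 * q t)
          = ENNReal.ofReal (((t - T n) * (A^n)⁻¹ + S n)^2 * ((1 - r) * A^n)) := by
      intro t ht
      rw [hq n t ht, hF n t (Set.Ioo_subset_Icc_self ht)]
      congr 1
      rw [mul_pow, Real.sq_sqrt h1r.le]
      field_simp
      ring
    rw [setLIntegral_congr_fun measurableSet_Ioo hcong]
    have hpos : 0 < (1 - r) * A^n := mul_pos h1r (hAn n)
    rw [← MeasureTheory.ofReal_integral_eq_lintegral_ofReal]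
    · congr 1
      have hstep : T (n+1) = T n + ℓ^n := hTstep n
      rw [hstep, radial_aux_int (T n) (ℓ^n) ((A^n)⁻¹) (S n) ((1-r)*A^n) (pow_pos hℓ0 n).le,
        hterm_def]
      have hne : (A:ℝ)^n ≠ 0 := (hAn n).ne'
      field_simp
      ring
    · exact ((by continuity : Continuous fun t : ℝ =>
        ((t - T n) * (A^n)⁻¹ + S n)^2 * ((1 - r) * A^n)).continuousOn.integrableOn_Icc).mono_set
        Set.Ioo_subset_Icc_self
    · filter_upwards with t
      exact mul_nonneg (sq_nonneg _) (mul_pos h1r (hAn n)).le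
  -- summability
  have hs1 : Summable (fun n : ℕ => (ℓ ^ 3 / A) ^ n) :=
    summable_geometric_of_lt_one hl3A0 hl3A
  set a2 : ℕ → ℝ := fun n => ℓ ^ (2 * n) * (1 - r ^ n) / (1 - r) with ha2_def
  set a3 : ℕ → ℝ := fun n => (A * ℓ) ^ n * ((1 - r ^ n) / (1 - r)) ^ 2 with ha3_def
  have hrn1 : ∀ n : ℕ, r ^ n ≤ 1 := fun n => pow_le_one₀ hr0.le hr1.le
  have hrn0 : ∀ n : ℕ, (0:ℝ) ≤ r ^ n := fun n => pow_nonneg hr0.le n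
  have hs2 : Summable a2 := by
    apply Summable.of_nonneg_of_le (f := fun n => (ℓ^2)^n * (1/(1-r)))
    · intro n
      simp only [ha2_def]
      exact div_nonneg (mul_nonneg (pow_nonneg hℓ0.le _) (by linarith [hrn1 n])) h1r.le
    · intro n
      simp only [ha2_def]
      rw [div_le_iff₀ h1r]
      have h1 : ℓ ^ (2*n) = (ℓ^2)^n := by rw [← pow_mul]
      have h2 := hrn1 n
      have h3 := hrn0 n
      have h4 : (0:ℝ) ≤ (ℓ^2)^n := pow_nonneg (sq_nonneg ℓ) n
      rw [h1]
      calc (ℓ^2)^n * (1 - r^n) ≤ (ℓ^2)^n * 1 := by nlinarith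
        _ = (ℓ^2)^n * (1/(1-r)) * (1-r) := by field_simp
    · exact Summable.mul_right _
        (summable_geometric_of_lt_one (r := ℓ^2) (sq_nonneg ℓ) (by nlinarith))
  have hs3 : Summable a3 := by
    apply Summable.of_nonneg_of_le (f := fun n => (A*ℓ)^n * (1/(1-r))^2)
    · intro n
      simp only [ha3_def]
      exact mul_nonneg (pow_nonneg hAl.le n) (sq_nonneg _)
    · intro n
      simp only [ha3_def]
      have hb : (1 - r^n)/(1-r) ≤ 1/(1-r) := (div_le_div_iff_of_pos_right h1r).2 (by linarith [hrn0 n])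
      have hb0 : 0 ≤ (1 - r^n)/(1-r) := div_nonneg (by linarith [hrn1 n]) h1r.le
      exact mul_le_mul_of_nonneg_left (pow_le_pow_left₀ hb0 hb 2)
        (pow_nonneg hAl.le n)
    · exact (summable_geometric_of_lt_one hAl.le hAl1).mul_right _
  -- rewrite term
  have hterm_eq : ∀ n, term n = (1 - r) * ((1/3) * (ℓ^3/A)^n + a2 n + a3 n) := by
    intro n
    simp only [hterm_def, ha2_def, ha3_def]
    rw [hSform n]
    have h1 : (ℓ^3/A)^n = (ℓ^n)^3/A^n := by
      rw [div_pow, ← pow_mul, ← pow_mul, Nat.mul_comm]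
    have h2 : ℓ ^ (2*n) = (ℓ^n)^2 := by rw [← pow_mul, Nat.mul_comm]
    rw [h1, h2]
    ring
  have hterm_summable : Summable term := by
    exact Summable.congr ((((hs1.mul_left (1/3)).add hs2).add hs3).mul_left (1-r))
      (fun n => (hterm_eq n).symm)
  have hterm_nonneg : ∀ n, 0 ≤ term n := by
    intro n
    have e1 : 0 ≤ (ℓ^n)^3/A^n/3 :=
      div_nonneg (div_nonneg (pow_nonneg (pow_nonneg hℓ0.le n) 3) (hAn n).le) (by norm_num)
    have e2 : 0 ≤ (ℓ^n)^2 * S n := mul_nonneg (sq_nonneg _) (hSnonneg n)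
    have e3 : 0 ≤ (A*ℓ)^n * (S n)^2 := mul_nonneg (pow_nonneg hAl.le n) (sq_nonneg _)
    simp only [hterm_def]
    exact mul_nonneg h1r.le (by linarith)
  have htsum : ∑' n, term n
      = (1 - r) * ((1/3) * (∑' n : ℕ, (ℓ^3/A)^n) + (∑' n, a2 n) + (∑' n, a3 n)) := by
    calc ∑' n, term n = ∑' n, (1-r) * ((1/3) * (ℓ^3/A)^n + a2 n + a3 n) :=
          tsum_congr hterm_eq
      _ = (1-r) * ∑' n, ((1/3) * (ℓ^3/A)^n + a2 n + a3 n) := tsum_mul_left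
      _ = (1-r) * ((1/3) * (∑' n : ℕ, (ℓ^3/A)^n) + (∑' n, a2 n) + (∑' n, a3 n)) := by
          rw [Summable.tsum_add ((hs1.mul_left (1/3)).add hs2) hs3,
            Summable.tsum_add (hs1.mul_left (1/3)) hs2, tsum_mul_left]
  -- main computation
  have hmain : (∫⁻ t in Set.Ioo 0 L, ENNReal.ofReal (F t ^ 2 * q t))
      = ENNReal.ofReal (∑' n, term n) := by
    rw [setLIntegral_congr haeeq,
      lintegral_iUnion (fun n => measurableSet_Ioo) hdisj,
      ENNReal.ofReal_tsum_of_nonneg hterm_nonneg hterm_summable]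
    exact tsum_congr hint
  refine ⟨hs1, hs2, hs3, ?_, ?_⟩
  · rw [hmain, htsum]
  · rw [hmain]
    exact ENNReal.ofReal_lt_top
end
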